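/- Let K be a compact topological group and V a finite-dimensional real vector space with a continuous linear representation of K, and let ω be a K-invariant alternating bilinear form on V. Let V^K be the fixed subspace. Then the kernel of the restriction of ω to V^K equals the intersection of the kernel of ω with V^K; that is, {v ∈ V^K : ω(v, u) = 0 for all u ∈ V^K} = {v ∈ V : ω(v, u) = 0 for all u ∈ V} ∩ V^K. -/

import Mathlib

/-- The submodule of vectors fixed by a linear representation `ρ` of a group `K`. -/
def fixedSubmodule {K V : Type*} [Group K] [AddCommGroup V] [Module ℝ V]
    (ρ : K →* (V ≃ₗ[ℝ] V)) : Submodule ℝ V where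
  carrier := {v | ∀ k : K, ρ k v = v}
  add_mem' := by
    intro a b ha hb k
    simp [map_add, ha k, hb k]
  zero_mem' := by
    intro k
    simp
  smul_mem' := by
    intro c v hv k
    simp [map_smul, hv k]

open MeasureTheory

/-- A continuous function on a compact space is integrable w.r.t. any finite measure. -/
lemma continuous_integrable_of_compact {X E : Type*} [TopologicalSpace X] [MeasurableSpace X]
    [OpensMeasurableSpace X] [CompactSpace X] [NormedAddCommGroup E]
    [TopologicalSpace.PseudoMetrizableSpace E] [SecondCountableTopology E]
    {μ : Measure X} [IsFiniteMeasure μ] {f : X → E} (hf : Continuous f) :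
    Integrable f μ := by
  obtain ⟨C, hC⟩ := (isCompact_range hf).isBounded.exists_norm_le
  refine ⟨?_, HasFiniteIntegral.of_bounded (C := C)
    (Filter.Eventually.of_forall fun x => hC _ (Set.mem_range_self x))⟩
  exact hf.stronglyMeasurable.aestronglyMeasurable

/-- For a continuous representation of a compact group `K` on a finite-dimensional real
vector space `V` and a `K`-invariant alternating bilinear form `ω` on `V`, the kernel of
the restriction of `ω` to the fixed subspace `V^K` equals `(ker ω) ∩ V^K`. -/
theorem ker_restriction_eq_ker_inter_fixed
    {K V : Type*} [Group K] [TopologicalSpace K] [IsTopologicalGroup K] [CompactSpace K]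
    [NormedAddCommGroup V] [NormedSpace ℝ V] [FiniteDimensional ℝ V]
    (ρ : K →* (V ≃ₗ[ℝ] V)) (hρ : Continuous fun p : K × V => ρ p.1 p.2)
    (ω : V →ₗ[ℝ] V →ₗ[ℝ] ℝ)
    (hω : ∀ (k : K) (u v : V), ω (ρ k u) (ρ k v) = ω u v)
    (halt : ∀ v : V, ω v v = 0) :
    {v : V | v ∈ fixedSubmodule ρ ∧ ∀ u ∈ fixedSubmodule ρ, ω v u = 0} =
      {v : V | ∀ u : V, ω v u = 0} ∩ (fixedSubmodule ρ : Set V) := by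
  letI : MeasurableSpace K := borel K
  haveI : BorelSpace K := ⟨rfl⟩
  set μ := Measure.haarMeasure (⊤ : TopologicalSpace.PositiveCompacts K) with hμ
  haveI : IsProbabilityMeasure μ := ⟨by
    rw [← TopologicalSpace.PositiveCompacts.coe_top (α := K)]
    exact Measure.haarMeasure_self⟩
  ext v
  simp only [Set.mem_setOf_eq, Set.mem_inter_iff, SetLike.mem_coe]
  constructor
  · rintro ⟨hv, h⟩
    refine ⟨fun u => ?_, hv⟩
    -- average `u` over the group
    have hcont : Continuous fun k : K => ρ k u :=
      hρ.comp (continuous_id.prodMk continuous_const)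
    have hint : Integrable (fun k : K => ρ k u) μ := continuous_integrable_of_compact hcont
    set ub : V := ∫ k, ρ k u ∂μ with hub_def
    have hub : ub ∈ fixedSubmodule ρ := by
      intro k'
      set L : V →L[ℝ] V := LinearMap.toContinuousLinearMap (ρ k').toLinearMap with hL
      have h1 : ρ k' ub = ∫ k, ρ k' (ρ k u) ∂μ := by
        have := L.integral_comp_comm hint
        simpa [hL] using this.symm
      rw [h1]
      have h2 : (fun k : K => ρ k' (ρ k u)) = fun k : K => ρ (k' * k) u := by
        funext k; rw [map_mul]; rfl
      rw [h2, integral_mul_left_eq_self (μ := μ) (fun k : K => ρ k u) k']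
    have hωv : ω v ub = ω v u := by
      set L : V →L[ℝ] ℝ := LinearMap.toContinuousLinearMap (ω v) with hL
      have h1 : ω v ub = ∫ k, ω v (ρ k u) ∂μ := by
        have := L.integral_comp_comm hint
        simpa [hL] using this.symm
      have h2 : (fun k : K => ω v (ρ k u)) = fun _ : K => ω v u := by
        funext k
        conv_lhs => rw [← hv k]
        exact hω k v u
      rw [h1, h2]
      simp
    have := h ub hub
    rw [hωv] at this
    exact this
  · rintro ⟨h, hv⟩
    exact ⟨hv, fun u _ => h u⟩
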